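/- For every k with 1 ≤ k ≤ n, the following identity (relation R_k^−) holds in F_q[x_1,…,x_n,y_1,…,y_n]: Σ_{i=0}^{k−1} Σ_{j=0}^{n−k} (−1)^{i+j+n+1} c_{k−1,i} · (c*_{n−k,j})^q · u_{i−j−1}^{q^{min(i,j+1)}} = f_k · (f*_{n+1−k})^q. -/

import Mathlib

open MvPolynomial

variable (F : Type) [Field F] [Fintype F] (n : ℕ)

/-- `fX F n k` is the orbit product `f_k` (1-indexed, meaningful for `1 ≤ k ≤ n`). -/
noncomputable def fX (k : ℕ) : MvPolynomial (Fin n ⊕ Fin n) F :=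
  if h : 1 ≤ k ∧ k ≤ n then
    ∏ α : Fin (k - 1) → F,
      (X (Sum.inl ⟨k - 1, by omega⟩) +
        ∑ j : Fin (k - 1), C (α j) * X (Sum.inl ⟨j.val, by omega⟩))
  else 0

/-- `fY F n k` is `f_k^*` (1-indexed), the orbit product of `y_{n+1-k}`. -/
noncomputable def fY (k : ℕ) : MvPolynomial (Fin n ⊕ Fin n) F :=
  if h : 1 ≤ k ∧ k ≤ n then
    ∏ α : Fin (k - 1) → F,
      (X (Sum.inr ⟨n - k, by omega⟩) +
        ∑ j : Fin (k - 1), C (α j) * X (Sum.inr ⟨n - 1 - j.val, by omega⟩))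
  else 0

/-- `uInv F n j` is the invariant `u_j`, for `j : ℤ`. -/
noncomputable def uInv (j : ℤ) : MvPolynomial (Fin n ⊕ Fin n) F :=
  if 0 ≤ j then ∑ k : Fin n, X (Sum.inl k) ^ (Fintype.card F) ^ j.toNat * X (Sum.inr k)
  else ∑ k : Fin n, X (Sum.inl k) * X (Sum.inr k) ^ (Fintype.card F) ^ (-j).toNat

/-- `cX F n s t` is the Dickson-type invariant `c_{s,t}` (in the `x`-variables):
the sum over strictly increasing sequences `1 ≤ j_1 < ⋯ < j_{s-t} ≤ s` (encoded as
strictly monotone functions `Fin (s-t) → Fin s`) of `∏_l f_{j_l}^{(q-1)·q^{t+l-j_l}}`. -/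
noncomputable def cX (s t : ℕ) : MvPolynomial (Fin n ⊕ Fin n) F :=
  if s ≤ n then
    ∑ g ∈ Finset.univ.filter (fun g : Fin (s - t) → Fin s => ∀ a b : Fin (s - t), a < b → g a < g b),
      ∏ l : Fin (s - t),
        fX F n ((g l).val + 1) ^ ((Fintype.card F - 1) * (Fintype.card F) ^ (t + l.val - (g l).val))
  else 0

/-- `cY F n s t` is `c_{s,t}^*` (in the `y`-variables). -/
noncomputable def cY (s t : ℕ) : MvPolynomial (Fin n ⊕ Fin n) F :=
  if s ≤ n then
    ∑ g ∈ Finset.univ.filter (fun g : Fin (s - t) → Fin s => ∀ a b : Fin (s - t), a < b → g a < g b),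
      ∏ l : Fin (s - t),
        fY F n ((g l).val + 1) ^ ((Fintype.card F - 1) * (Fintype.card F) ^ (t + l.val - (g l).val))
  else 0



namespace RkAux

variable {F : Type} [Field F] [Fintype F]

/-- ∏ a : F, (X - C a) = X^q - X in F[X]. -/
theorem prod_X_sub_C_eq : ∏ a : F, (Polynomial.X - Polynomial.C a)
    = Polynomial.X ^ Fintype.card F - Polynomial.X := by
  have h2 : (1 : ℕ) ≤ Fintype.card F - 1 := by
    have := Fintype.one_lt_card (α := F); omega
  have hm : (Polynomial.X ^ Fintype.card F - Polynomial.X : Polynomial F).Monic := by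
    have : Fintype.card F - 1 + 1 = Fintype.card F := by
      have := Fintype.one_lt_card (α := F); omega
    rw [← this]
    apply Polynomial.monic_X_pow_sub
    rw [Polynomial.degree_X]
    exact_mod_cast (by omega : 1 < Fintype.card F - 1 + 1)
  have hr := FiniteField.roots_X_pow_card_sub_X F
  have hd := FiniteField.X_pow_card_sub_X_natDegree_eq F (Fintype.one_lt_card (α := F))
  have hs : Multiset.card (Polynomial.X ^ Fintype.card F - Polynomial.X : Polynomial F).roots
      = (Polynomial.X ^ Fintype.card F - Polynomial.X : Polynomial F).natDegree := by
    rw [hr, hd]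
    simp [Finset.card_univ]
  have := (Polynomial.prod_multiset_X_sub_C_of_monic_of_roots_card_eq hm hs).symm
  rw [hr] at this
  rw [this]
  rfl

/-- For a field K and ring hom ψ : F →+* K: ∏ a : F, (u - ψ a) = u^q - u. -/
theorem prod_sub_eq {K : Type} [Field K] (ψ : F →+* K) (u : K) :
    ∏ a : F, (u - ψ a) = u ^ Fintype.card F - u := by
  have := congrArg (Polynomial.eval₂ ψ u) (prod_X_sub_C_eq (F := F))
  simpa [Polynomial.eval₂_finset_prod] using this

theorem prod_add_mul_eq {K : Type} [Field K] (ψ : F →+* K) (t d : K) :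
    ∏ a : F, (t + ψ a * d) = t ^ Fintype.card F - d ^ (Fintype.card F - 1) * t := by
  have hq1 : Fintype.card F - 1 ≠ 0 := by have := Fintype.one_lt_card (α := F); omega
  by_cases hd : d = 0
  · simp [hd, Finset.prod_const, Finset.card_univ, zero_pow hq1]
  · have h1 : ∏ a : F, (t + ψ a * d) = ∏ a : F, (t - ψ a * d) := by
      apply Fintype.prod_equiv (Equiv.neg F)
      intro a
      simp [map_neg]
    have h2 : ∏ a : F, (t - ψ a * d) = ∏ a : F, (d * (t * d⁻¹ - ψ a)) := by
      apply Finset.prod_congr rfl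
      intro a _
      field_simp
    rw [h1, h2, Finset.prod_mul_distrib, Finset.prod_const, Finset.card_univ,
      prod_sub_eq ψ (t * d⁻¹)]
    have hdq : d ^ Fintype.card F = d ^ (Fintype.card F - 1) * d := by
      rw [← pow_succ]
      congr 1
      omega
    have e1 : d ^ Fintype.card F * (t * d⁻¹) ^ Fintype.card F = t ^ Fintype.card F := by
      rw [mul_pow, mul_comm (t ^ Fintype.card F), ← mul_assoc, ← mul_pow,
        mul_inv_cancel₀ hd, one_pow, one_mul]
    have e2 : d ^ Fintype.card F * (t * d⁻¹) = d ^ (Fintype.card F - 1) * t := by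
      rw [hdq]
      field_simp
    rw [mul_sub, e1, e2]

variable {n : ℕ}

theorem exists_frob :
    ∃ Fr : MvPolynomial (Fin n ⊕ Fin n) F →+* MvPolynomial (Fin n ⊕ Fin n) F,
      ∀ x, Fr x = x ^ Fintype.card F := by
  set p := ringChar F with hp
  have hpp : p.Prime := CharP.char_is_prime F p
  haveI : Fact p.Prime := ⟨hpp⟩
  obtain ⟨m, hm, hq⟩ := FiniteField.card F p
  haveI : CharP (MvPolynomial (Fin n ⊕ Fin n) F) p := by infer_instance
  haveI : ExpChar (MvPolynomial (Fin n ⊕ Fin n) F) p := ExpChar.prime hpp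
  refine ⟨iterateFrobenius (MvPolynomial (Fin n ⊕ Fin n) F) p (m : ℕ), fun x => ?_⟩
  rw [iterateFrobenius_def, ← hq]

/-- Key product identity in the polynomial ring. -/
theorem prod_linear (T c : MvPolynomial (Fin n ⊕ Fin n) F) :
    ∏ β : F, (T + C β * c) = T ^ Fintype.card F - c ^ (Fintype.card F - 1) * T := by
  have hinj : Function.Injective (algebraMap (MvPolynomial (Fin n ⊕ Fin n) F)
      (FractionRing (MvPolynomial (Fin n ⊕ Fin n) F))) :=
    IsFractionRing.injective _ _
  apply hinj
  rw [map_prod, map_sub, map_mul, map_pow, map_pow]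
  have := prod_add_mul_eq ((algebraMap (MvPolynomial (Fin n ⊕ Fin n) F)
      (FractionRing (MvPolynomial (Fin n ⊕ Fin n) F))).comp (C : F →+* MvPolynomial (Fin n ⊕ Fin n) F))
    (algebraMap _ _ T) (algebraMap _ _ c)
  simpa [map_add, map_mul] using this

section Defs

variable (F n)

/-- x-variable sequence. -/
noncomputable def vx (j : ℕ) : MvPolynomial (Fin n ⊕ Fin n) F :=
  if h : j < n then X (Sum.inl ⟨j, h⟩) else 0

/-- reversed y-variable sequence. -/
noncomputable def vy (j : ℕ) : MvPolynomial (Fin n ⊕ Fin n) F :=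
  if h : j < n then X (Sum.inr ⟨n - 1 - j, by omega⟩) else 0

end Defs

/-- generic orbit product. -/
noncomputable def gP (v : ℕ → MvPolynomial (Fin n ⊕ Fin n) F) (s : ℕ)
    (z : MvPolynomial (Fin n ⊕ Fin n) F) : MvPolynomial (Fin n ⊕ Fin n) F :=
  ∏ α : Fin s → F, (z + ∑ j : Fin s, C (α j) * v j.val)

/-- generic `f_{j+1}` (0-indexed). -/
noncomputable def gf (v : ℕ → MvPolynomial (Fin n ⊕ Fin n) F) (j : ℕ) :
    MvPolynomial (Fin n ⊕ Fin n) F := gP v j (v j)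

/-- generic coefficient sum with explicit arity. -/
noncomputable def gD (v : ℕ → MvPolynomial (Fin n ⊕ Fin n) F) (r s t : ℕ) :
    MvPolynomial (Fin n ⊕ Fin n) F :=
  ∑ g ∈ Finset.univ.filter (fun g : Fin r → Fin s => ∀ a b : Fin r, a < b → g a < g b),
    ∏ l : Fin r,
      gf v (g l).val ^ ((Fintype.card F - 1) * (Fintype.card F) ^ (t + l.val - (g l).val))

/-- generic `c_{s,t}`. -/
noncomputable def gC (v : ℕ → MvPolynomial (Fin n ⊕ Fin n) F) (s t : ℕ) :
    MvPolynomial (Fin n ⊕ Fin n) F := gD v (s - t) s t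

theorem fX_eq (k : ℕ) (h1 : 1 ≤ k) (h2 : k ≤ n) : fX F n k = gf (vx F n) (k - 1) := by
  rw [fX, dif_pos ⟨h1, h2⟩, gf, gP]
  apply Finset.prod_congr rfl
  intro α _
  congr 1
  · rw [vx, dif_pos (by omega : k - 1 < n)]
  · apply Finset.sum_congr rfl
    intro j _
    congr 1
    rw [vx, dif_pos (by omega : (j : ℕ) < n)]

theorem fY_eq (k : ℕ) (h1 : 1 ≤ k) (h2 : k ≤ n) : fY F n k = gf (vy F n) (k - 1) := by
  rw [fY, dif_pos ⟨h1, h2⟩, gf, gP]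
  apply Finset.prod_congr rfl
  intro α _
  congr 1
  · rw [vy, dif_pos (by omega : k - 1 < n)]
    exact congrArg (fun i => X (Sum.inr i)) (Fin.ext (show n - k = n - 1 - (k - 1) by omega))
  · apply Finset.sum_congr rfl
    intro j _
    congr 1
    rw [vy, dif_pos (by omega : (j : ℕ) < n)]

theorem cX_eq (s t : ℕ) (hs : s ≤ n) : cX F n s t = gC (vx F n) s t := by
  rw [cX, if_pos hs, gC, gD]
  apply Finset.sum_congr rfl
  intro g _
  apply Finset.prod_congr rfl
  intro l _
  congr 1
  rw [fX_eq ((g l).val + 1) (by omega) (by have := (g l).isLt; omega)]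
  simp

theorem cY_eq (s t : ℕ) (hs : s ≤ n) : cY F n s t = gC (vy F n) s t := by
  rw [cY, if_pos hs, gC, gD]
  apply Finset.sum_congr rfl
  intro g _
  apply Finset.prod_congr rfl
  intro l _
  congr 1
  rw [fY_eq ((g l).val + 1) (by omega) (by have := (g l).isLt; omega)]
  simp

section Comb

variable (v : ℕ → MvPolynomial (Fin n ⊕ Fin n) F)

theorem sm_lower {a b : ℕ} (g : Fin a → Fin b)
    (hg : ∀ i j : Fin a, i < j → g i < g j) (l : Fin a) : l.val ≤ (g l).val := by
  induction' hm : l.val with m ih generalizing l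
  · omega
  · have hma : m < a := by omega
    have hlt : (⟨m, hma⟩ : Fin a) < l := by
      rw [Fin.lt_def]
      show m < l.val
      omega
    have h1 := hg _ _ hlt
    have h2 := ih ⟨m, hma⟩ rfl
    rw [Fin.lt_def] at h1
    omega

theorem sm_upper {a b : ℕ} (g : Fin a → Fin b)
    (hg : ∀ i j : Fin a, i < j → g i < g j) (l : Fin a) : (g l).val ≤ b - a + l.val := by
  have hrev : ∀ i j : Fin a, i < j → (g i.rev).rev < (g j.rev).rev := by
    intro i j hij
    rw [Fin.rev_lt_rev]
    exact hg _ _ (Fin.rev_lt_rev.mpr hij)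
  have key := sm_lower (fun i : Fin a => (g i.rev).rev) hrev l.rev
  simp only [Fin.rev_rev] at key
  rw [Fin.val_rev, Fin.val_rev] at key
  have h3 := (g l).isLt
  have h4 := l.isLt
  omega

theorem gD_top (r s t : ℕ) :
    ∑ g ∈ (Finset.univ.filter
        (fun g : Fin (r+1) → Fin (s+1) => ∀ a b : Fin (r+1), a < b → g a < g b)).filter
        (fun g => g (Fin.last r) = Fin.last s),
      ∏ l : Fin (r+1),
        gf v (g l).val ^ ((Fintype.card F - 1) * (Fintype.card F) ^ (t + l.val - (g l).val))
    = gD v r s t * gf v s ^ ((Fintype.card F - 1) * (Fintype.card F) ^ (t + r - s)) := by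
  rw [gD, Finset.sum_mul]
  refine Finset.sum_bij' (i := fun g hg => fun l : Fin r => (⟨(g l.castSucc).val, by
      simp only [Finset.mem_filter, Finset.mem_univ, true_and] at hg
      have h1 := hg.1 l.castSucc (Fin.last r) (Fin.castSucc_lt_last l)
      rw [hg.2, Fin.lt_def] at h1
      simpa using h1⟩ : Fin s))
    (j := fun g' hg' => fun l : Fin (r+1) =>
      if h : l.val < r then (g' ⟨l.val, h⟩).castSucc else Fin.last s)
    ?_ ?_ ?_ ?_ ?_
  · -- hi
    intro g hg
    simp only [Finset.mem_filter, Finset.mem_univ, true_and] at hg ⊢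
    intro a b hab
    have := hg.1 a.castSucc b.castSucc (by rwa [Fin.castSucc_lt_castSucc_iff])
    rw [Fin.lt_def] at this ⊢
    exact this
  · -- hj
    intro g' hg'
    simp only [Finset.mem_filter, Finset.mem_univ, true_and] at hg' ⊢
    constructor
    · intro a b hab
      rw [Fin.lt_def] at hab
      by_cases hb : b.val < r
      · have ha : a.val < r := by omega
        rw [dif_pos ha, dif_pos hb]
        refine Fin.castSucc_lt_castSucc_iff.mpr (hg' _ _ ?_)
        rw [Fin.lt_def]
        exact hab
      · have ha : a.val < r := by have := b.isLt; omega
        rw [dif_pos ha, dif_neg (by omega)]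
        exact Fin.castSucc_lt_last _
    · rw [dif_neg (by simp)]
  · -- left inverse
    intro g hg
    simp only [Finset.mem_filter, Finset.mem_univ, true_and] at hg
    funext l
    dsimp only
    by_cases h : l.val < r
    · rw [dif_pos h]
      have hcl : (Fin.castSucc (⟨l.val, h⟩ : Fin r)) = l := Fin.ext rfl
      exact Fin.ext (congrArg (fun x => (g x).val) hcl)
    · rw [dif_neg h]
      have hl : l = Fin.last r := Fin.ext (show l.val = r by have := l.isLt; omega)
      rw [hl]
      exact hg.2.symm
  · -- right inverse
    intro g' hg'
    funext l
    dsimp only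
    have h1 : (Fin.castSucc l).val < r := l.isLt
    apply Fin.ext
    dsimp only
    rw [dif_pos h1]
    exact congrArg (fun x => (g' x).val) (Fin.ext rfl)
  · -- terms
    intro g hg
    simp only [Finset.mem_filter, Finset.mem_univ, true_and] at hg
    rw [Fin.prod_univ_castSucc]
    refine congrArg₂ (· * ·) ?_ ?_
    · exact Finset.prod_congr rfl fun l _ => rfl
    · rw [hg.2]
      simp [Fin.val_last]

theorem not_top_bound {r s : ℕ} (g : Fin (r+1) → Fin (s+1))
    (h1 : ∀ a b : Fin (r+1), a < b → g a < g b) (h2 : ¬ g (Fin.last r) = Fin.last s)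
    (l : Fin (r+1)) : (g l).val < s := by
  have ha : (g l).val ≤ (g (Fin.last r)).val := by
    rcases eq_or_lt_of_le (Fin.le_last l) with h | h
    · rw [h]
    · exact le_of_lt (Fin.lt_def.mp (h1 l (Fin.last r) h))
  have hb : (g (Fin.last r)).val ≠ s := fun hc =>
    h2 (Fin.ext (show (g (Fin.last r)).val = (Fin.last s).val by rw [Fin.val_last]; exact hc))
  have hc := (g (Fin.last r)).isLt
  omega

theorem gD_not_top (Fr : MvPolynomial (Fin n ⊕ Fin n) F →+* MvPolynomial (Fin n ⊕ Fin n) F)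
    (hFr : ∀ x, Fr x = x ^ Fintype.card F) (r s t : ℕ) (ht : 1 ≤ t) (hst : s ≤ t + r) :
    ∑ g ∈ (Finset.univ.filter
        (fun g : Fin (r+1) → Fin (s+1) => ∀ a b : Fin (r+1), a < b → g a < g b)).filter
        (fun g => ¬ g (Fin.last r) = Fin.last s),
      ∏ l : Fin (r+1),
        gf v (g l).val ^ ((Fintype.card F - 1) * (Fintype.card F) ^ (t + l.val - (g l).val))
    = Fr (gD v (r+1) s (t-1)) := by
  rw [gD, map_sum]
  refine Finset.sum_bij' (i := fun g hg => fun l : Fin (r+1) => (⟨(g l).val, by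
      simp only [Finset.mem_filter, Finset.mem_univ, true_and] at hg
      exact not_top_bound g hg.1 hg.2 l⟩ : Fin s))
    (j := fun g' hg' => fun l : Fin (r+1) => (g' l).castSucc)
    ?_ ?_ ?_ ?_ ?_
  · intro g hg
    simp only [Finset.mem_filter, Finset.mem_univ, true_and] at hg ⊢
    intro a b hab
    rw [Fin.lt_def]
    exact Fin.lt_def.mp (hg.1 a b hab)
  · intro g' hg'
    simp only [Finset.mem_filter, Finset.mem_univ, true_and] at hg' ⊢
    constructor
    · intro a b hab
      rw [Fin.castSucc_lt_castSucc_iff]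
      exact hg' a b hab
    · exact (Fin.castSucc_lt_last _).ne
  · intro g hg
    funext l
    exact Fin.ext rfl
  · intro g' hg'
    funext l
    exact Fin.ext rfl
  · intro g hg
    simp only [Finset.mem_filter, Finset.mem_univ, true_and] at hg
    have hpf : ∀ l : Fin (r+1), (g l).val < s := fun l => not_top_bound g hg.1 hg.2 l
    have hup : ∀ l : Fin (r+1), (g l).val ≤ s - (r+1) + l.val := by
      intro l
      exact sm_upper (fun l : Fin (r+1) => (⟨(g l).val, hpf l⟩ : Fin s))
        (fun i j hij => by
          rw [Fin.lt_def]
          exact Fin.lt_def.mp (hg.1 i j hij)) l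
    rw [map_prod]
    refine Finset.prod_congr rfl fun l _ => ?_
    rw [map_pow, hFr, ← pow_mul]
    congr 1
    have h5 := hup l
    show (Fintype.card F - 1) * Fintype.card F ^ (t + l.val - (g l).val)
      = Fintype.card F * ((Fintype.card F - 1) * Fintype.card F ^ (t - 1 + l.val - (g l).val))
    rw [mul_comm (Fintype.card F), mul_assoc, ← pow_succ]
    congr 2
    omega

theorem gC_rec_pos (Fr : MvPolynomial (Fin n ⊕ Fin n) F →+* MvPolynomial (Fin n ⊕ Fin n) F)
    (hFr : ∀ x, Fr x = x ^ Fintype.card F) (s t : ℕ) (ht1 : 1 ≤ t) (hts : t ≤ s) :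
    gC v (s+1) t = Fr (gC v s (t-1)) + gC v s t * gf v s ^ (Fintype.card F - 1) := by
  rw [gC, show s + 1 - t = (s - t) + 1 by omega, gD]
  rw [← Finset.sum_filter_add_sum_filter_not
    (Finset.univ.filter
      (fun g : Fin ((s-t)+1) → Fin (s+1) => ∀ a b : Fin ((s-t)+1), a < b → g a < g b))
    (fun g => g (Fin.last (s-t)) = Fin.last s)]
  rw [gD_top v (s-t) s t, gD_not_top v Fr hFr (s-t) s t ht1 (by omega)]
  rw [show t + (s - t) - s = 0 by omega, pow_zero, mul_one]
  rw [gC, gC, show s - (t-1) = (s - t) + 1 by omega]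
  ring

theorem gC_rec_zero (s : ℕ) :
    gC v (s+1) 0 = gC v s 0 * gf v s ^ (Fintype.card F - 1) := by
  rw [gC, show s + 1 - 0 = s + 1 from rfl, gD]
  rw [← Finset.sum_filter_add_sum_filter_not
    (Finset.univ.filter
      (fun g : Fin (s+1) → Fin (s+1) => ∀ a b : Fin (s+1), a < b → g a < g b))
    (fun g => g (Fin.last s) = Fin.last s)]
  have hempty : (Finset.univ.filter
      (fun g : Fin (s+1) → Fin (s+1) => ∀ a b : Fin (s+1), a < b → g a < g b)).filter
      (fun g => ¬ g (Fin.last s) = Fin.last s) = ∅ := by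
    rw [Finset.filter_eq_empty_iff]
    intro g hg
    simp only [Finset.mem_filter, Finset.mem_univ, true_and] at hg
    intro hne
    apply hne
    have h1 := sm_lower g hg (Fin.last s)
    have h2 := (g (Fin.last s)).isLt
    apply Fin.ext
    rw [Fin.val_last] at h1 ⊢
    omega
  rw [hempty, Finset.sum_empty, add_zero, gD_top v s s 0]
  rw [show 0 + s - s = 0 by omega, pow_zero, mul_one]
  rfl

theorem gC_diag (s : ℕ) : gC v s s = 1 := by
  rw [gC, Nat.sub_self, gD]
  rw [Finset.filter_true_of_mem (fun g _ => fun a b hab => absurd a.isLt (by omega))]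
  rw [Finset.univ_unique, Finset.sum_singleton]
  exact Finset.prod_empty

theorem npe {a b : ℕ} (h : a % 2 = b % 2) :
    ((-1 : MvPolynomial (Fin n ⊕ Fin n) F))^a = (-1)^b := by
  rcases Nat.even_or_odd a with ha | ha
  · have hb : Even b := by rw [Nat.even_iff] at ha ⊢; omega
    rw [Even.neg_one_pow ha, Even.neg_one_pow hb]
  · have hb : Odd b := by rw [Nat.odd_iff] at ha ⊢; omega
    rw [Odd.neg_one_pow ha, Odd.neg_one_pow hb]

theorem gP_succ (s : ℕ) (z : MvPolynomial (Fin n ⊕ Fin n) F) :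
    gP v (s+1) z = ∏ β : F, gP v s (z + C β * v s) := by
  have h1 : gP v (s+1) z
      = ∏ p : F × (Fin s → F), (z + C p.1 * v s + ∑ j : Fin s, C (p.2 j) * v j.val) := by
    rw [gP]
    refine (Fintype.prod_equiv (Fin.snocEquiv (fun _ => F)) _ _ fun p => ?_).symm
    rw [Fin.sum_univ_castSucc]
    simp only [Fin.snocEquiv, Equiv.coe_fn_mk, Fin.snoc_castSucc, Fin.snoc_last,
      Fin.val_last, Fin.coe_castSucc]
    ring
  rw [h1, Fintype.prod_prod_type]
  rfl

theorem add_pow_qpow (Fr : MvPolynomial (Fin n ⊕ Fin n) F →+* MvPolynomial (Fin n ⊕ Fin n) F)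
    (hFr : ∀ x, Fr x = x ^ Fintype.card F) (t : ℕ) (a b : MvPolynomial (Fin n ⊕ Fin n) F) :
    (a + b) ^ (Fintype.card F ^ t) = a ^ (Fintype.card F ^ t) + b ^ (Fintype.card F ^ t) := by
  induction t with
  | zero => simp
  | succ t ih =>
    rw [pow_succ, pow_mul, pow_mul, pow_mul, ih, ← hFr, map_add, hFr, hFr]

theorem C_pow_qpow (t : ℕ) (β : F) :
    (C β : MvPolynomial (Fin n ⊕ Fin n) F) ^ (Fintype.card F ^ t) = C β := by
  rw [← map_pow, FiniteField.pow_card_pow]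

theorem sum_step (Fr : MvPolynomial (Fin n ⊕ Fin n) F →+* MvPolynomial (Fin n ⊕ Fin n) F)
    (hFr : ∀ x, Fr x = x ^ Fintype.card F) (s : ℕ) (z : MvPolynomial (Fin n ⊕ Fin n) F) :
    ∑ t ∈ Finset.range (s+1+1), (-1:MvPolynomial (Fin n ⊕ Fin n) F)^(s+1+t) * gC v (s+1) t
        * z^(Fintype.card F ^ t)
    = (∑ t ∈ Finset.range (s+1), (-1:MvPolynomial (Fin n ⊕ Fin n) F)^(s+t) * Fr (gC v s t)
        * z^(Fintype.card F ^ (t+1)))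
    + ∑ t ∈ Finset.range (s+1), (-1:MvPolynomial (Fin n ⊕ Fin n) F)^(s+1+t)
        * (gC v s t * gf v s ^ (Fintype.card F - 1)) * z^(Fintype.card F ^ t) := by
  have hterm : ∀ t ∈ Finset.range (s+1+1),
      (-1:MvPolynomial (Fin n ⊕ Fin n) F)^(s+1+t) * gC v (s+1) t * z^(Fintype.card F ^ t)
      = (if t ≤ s then (-1:MvPolynomial (Fin n ⊕ Fin n) F)^(s+1+t)
            * (gC v s t * gf v s ^ (Fintype.card F - 1)) * z^(Fintype.card F ^ t) else 0)
      + (if 1 ≤ t then (-1:MvPolynomial (Fin n ⊕ Fin n) F)^(s+(t-1)) * Fr (gC v s (t-1))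
            * z^(Fintype.card F ^ ((t-1)+1)) else 0) := by
    intro t ht
    rw [Finset.mem_range] at ht
    rcases Nat.eq_zero_or_pos t with h0 | h1
    · subst h0
      rw [if_pos (by omega), if_neg (by omega), add_zero, gC_rec_zero]
      ring
    · rcases Nat.lt_or_ge t (s+1) with hts | hts
      · rw [if_pos (by omega : t ≤ s), if_pos (show 1 ≤ t from h1), gC_rec_pos v Fr hFr s t h1 (by omega)]
        have hsign : ((-1:MvPolynomial (Fin n ⊕ Fin n) F))^(s+(t-1)) = (-1)^(s+1+t) :=
          npe (by omega)
        have hexp : (t-1)+1 = t := by omega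
        rw [hsign, hexp]
        ring
      · have hts1 : t = s+1 := by omega
        subst hts1
        rw [if_neg (by omega), if_pos (show 1 ≤ s + 1 by omega), gC_diag, zero_add]
        have h2 : s + 1 - 1 = s := by omega
        rw [h2, gC_diag, map_one]
        have hsign : ((-1:MvPolynomial (Fin n ⊕ Fin n) F))^(s+1+(s+1)) = (-1)^(s+s) :=
          npe (by omega)
        rw [hsign]
  rw [Finset.sum_congr rfl hterm, Finset.sum_add_distrib]
  rw [add_comm]
  congr 1
  · rw [Finset.sum_range_succ', if_neg (by omega), add_zero]
    refine Finset.sum_congr rfl fun t ht => ?_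
    rw [if_pos (by omega)]
    norm_num
  · rw [Finset.sum_range_succ, if_neg (by omega), add_zero]
    refine Finset.sum_congr rfl fun t ht => ?_
    rw [Finset.mem_range] at ht
    rw [if_pos (by omega)]

theorem gP_eq (Fr : MvPolynomial (Fin n ⊕ Fin n) F →+* MvPolynomial (Fin n ⊕ Fin n) F)
    (hFr : ∀ x, Fr x = x ^ Fintype.card F) :
    ∀ (s : ℕ) (z : MvPolynomial (Fin n ⊕ Fin n) F),
      gP v s z = ∑ t ∈ Finset.range (s+1),
        (-1:MvPolynomial (Fin n ⊕ Fin n) F)^(s+t) * gC v s t * z^(Fintype.card F ^ t) := by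
  intro s
  induction s with
  | zero =>
    intro z
    have h1 : gP v 0 z = z := by
      rw [gP]
      simp
    rw [h1, Finset.sum_range_one, gC_diag]
    simp
  | succ s ih =>
    intro z
    have key : ∀ β : F, gP v s (z + C β * v s) = gP v s z + C β * gf v s := by
      intro β
      rw [ih (z + C β * v s), ih z, gf, ih (v s)]
      rw [Finset.mul_sum, ← Finset.sum_add_distrib]
      refine Finset.sum_congr rfl fun t _ => ?_
      rw [add_pow_qpow Fr hFr, mul_pow, C_pow_qpow]
      ring
    calc gP v (s+1) z
        = ∏ β : F, (gP v s z + C β * gf v s) := by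
          rw [gP_succ]
          exact Finset.prod_congr rfl fun β _ => key β
      _ = (gP v s z) ^ Fintype.card F
          - (gf v s) ^ (Fintype.card F - 1) * gP v s z := prod_linear _ _
      _ = (∑ t ∈ Finset.range (s+1), (-1:MvPolynomial (Fin n ⊕ Fin n) F)^(s+t)
            * Fr (gC v s t) * z^(Fintype.card F ^ (t+1)))
          + ∑ t ∈ Finset.range (s+1), (-1:MvPolynomial (Fin n ⊕ Fin n) F)^(s+1+t)
            * (gC v s t * gf v s ^ (Fintype.card F - 1)) * z^(Fintype.card F ^ t) := by
          rw [← hFr (gP v s z), ih z, map_sum, Finset.mul_sum, ← Finset.sum_sub_distrib,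
            ← Finset.sum_add_distrib]
          refine Finset.sum_congr rfl fun t _ => ?_
          rw [map_mul, map_mul, map_pow, map_neg, map_one, map_pow, hFr z, ← pow_mul]
          rw [show Fintype.card F * Fintype.card F ^ t = Fintype.card F ^ (t+1) by
            rw [pow_succ]; ring]
          ring
      _ = ∑ t ∈ Finset.range (s+1+1), (-1:MvPolynomial (Fin n ⊕ Fin n) F)^(s+1+t)
            * gC v (s+1) t * z^(Fintype.card F ^ t) := (sum_step v Fr hFr s z).symm

theorem gP_root (s m : ℕ) (hm : m < s) : gP v s (v m) = 0 := by
  rw [gP]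
  apply Finset.prod_eq_zero
    (Finset.mem_univ (fun j : Fin s => if j.val = m then (-1 : F) else 0))
  show v m + ∑ j : Fin s, C (if (j : Fin s).val = m then (-1:F) else 0) * v j.val = 0
  have hsum : ∑ j : Fin s, C (if (j : Fin s).val = m then (-1:F) else 0) * v j.val
      = - v m := by
    rw [Finset.sum_eq_single (⟨m, hm⟩ : Fin s)]
    · rw [if_pos rfl, map_neg, map_one]
      ring
    · intro j _ hj
      rw [if_neg (fun hc => hj (Fin.ext hc)), map_zero, zero_mul]
    · intro h
      exact absurd (Finset.mem_univ _) h
  rw [hsum, add_neg_cancel]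

theorem sum_pow_qpow (Fr : MvPolynomial (Fin n ⊕ Fin n) F →+* MvPolynomial (Fin n ⊕ Fin n) F)
    (hFr : ∀ x, Fr x = x ^ Fintype.card F) (e : ℕ) {ι : Type}
    (s : Finset ι) (f : ι → MvPolynomial (Fin n ⊕ Fin n) F) :
    (∑ i ∈ s, f i) ^ (Fintype.card F ^ e) = ∑ i ∈ s, f i ^ (Fintype.card F ^ e) := by
  induction e with
  | zero => simp
  | succ e ih =>
    rw [pow_succ, pow_mul, ih, ← hFr, map_sum]
    exact Finset.sum_congr rfl fun i _ => by rw [hFr, ← pow_mul, ← pow_succ]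

theorem uInv_pow (Fr : MvPolynomial (Fin n ⊕ Fin n) F →+* MvPolynomial (Fin n ⊕ Fin n) F)
    (hFr : ∀ x, Fr x = x ^ Fintype.card F) (i j : ℕ) :
    uInv F n ((i:ℤ) - (j:ℤ) - 1) ^ (Fintype.card F ^ min i (j+1))
    = ∑ m : Fin n, X (Sum.inl m) ^ (Fintype.card F ^ i)
        * X (Sum.inr m) ^ (Fintype.card F ^ (j+1)) := by
  rcases Nat.lt_or_ge i (j+1) with hij | hij
  · rw [uInv, if_neg (by push_cast; omega), show min i (j+1) = i by omega,
      show (-((i:ℤ) - (j:ℤ) - 1)).toNat = j + 1 - i by omega,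
      sum_pow_qpow Fr hFr]
    refine Finset.sum_congr rfl fun m _ => ?_
    rw [mul_pow, ← pow_mul, ← pow_add, show j + 1 - i + i = j + 1 by omega]
  · rw [uInv, if_pos (by push_cast; omega), show min i (j+1) = j + 1 by omega,
      show ((i:ℤ) - (j:ℤ) - 1).toNat = i - (j+1) by omega,
      sum_pow_qpow Fr hFr]
    refine Finset.sum_congr rfl fun m _ => ?_
    rw [mul_pow, ← pow_mul, ← pow_add, show i - (j+1) + (j+1) = i by omega]

theorem vx_eq (m : Fin n) : vx F n m.val = X (Sum.inl m) := by
  rw [vx, dif_pos m.isLt]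

theorem vy_eq (m : Fin n) : vy F n (n - 1 - m.val) = X (Sum.inr m) := by
  rw [vy, dif_pos (show n - 1 - m.val < n by have := m.isLt; omega)]
  exact congrArg (fun i => X (Sum.inr i))
    (Fin.ext (show n - 1 - (n - 1 - m.val) = m.val by have := m.isLt; omega))

end Comb

end RkAux

/-- Relation `R_k^-`. -/
theorem relation_Rk_minus (k : ℕ) (hk1 : 1 ≤ k) (hk2 : k ≤ n) :
    ∑ i ∈ Finset.range k, ∑ j ∈ Finset.range (n - k + 1),
      (-1 : MvPolynomial (Fin n ⊕ Fin n) F) ^ (i + j + n + 1) *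
        cX F n (k - 1) i * cY F n (n - k) j ^ (Fintype.card F) *
        uInv F n ((i : ℤ) - (j : ℤ) - 1) ^ (Fintype.card F ^ min i (j + 1))
    = fX F n k * fY F n (n + 1 - k) ^ (Fintype.card F) := by
  classical
  obtain ⟨Fr, hFr⟩ := RkAux.exists_frob (F := F) (n := n)
  have hkn : k - 1 < n := by omega
  have key : ∀ i ∈ Finset.range k, ∀ j ∈ Finset.range (n - k + 1),
      (-1 : MvPolynomial (Fin n ⊕ Fin n) F) ^ (i + j + n + 1) *
        cX F n (k - 1) i * cY F n (n - k) j ^ (Fintype.card F) *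
        uInv F n ((i : ℤ) - (j : ℤ) - 1) ^ (Fintype.card F ^ min i (j + 1))
      = ∑ m : Fin n,
          ((-1 : MvPolynomial (Fin n ⊕ Fin n) F) ^ (k - 1 + i)
            * RkAux.gC (RkAux.vx F n) (k - 1) i * X (Sum.inl m) ^ (Fintype.card F ^ i))
          * ((-1 : MvPolynomial (Fin n ⊕ Fin n) F) ^ (n - k + j)
            * Fr (RkAux.gC (RkAux.vy F n) (n - k) j)
            * X (Sum.inr m) ^ (Fintype.card F ^ (j + 1))) := by
    intro i hi j hj
    rw [RkAux.uInv_pow Fr hFr i j, RkAux.cX_eq (k - 1) i (by omega),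
      RkAux.cY_eq (n - k) j (by omega), ← hFr (RkAux.gC (RkAux.vy F n) (n - k) j),
      Finset.mul_sum]
    refine Finset.sum_congr rfl fun m _ => ?_
    rw [show ((-1 : MvPolynomial (Fin n ⊕ Fin n) F)) ^ (i + j + n + 1)
        = (-1) ^ ((k - 1 + i) + (n - k + j)) from RkAux.npe (by omega)]
    ring
  rw [Finset.sum_congr rfl fun i hi => Finset.sum_congr rfl fun j hj => key i hi j hj]
  rw [Finset.sum_congr rfl fun i (_ : i ∈ Finset.range k) => Finset.sum_comm]
  rw [Finset.sum_comm]
  rw [Finset.sum_congr rfl fun (m : Fin n) _ => (Finset.sum_mul_sum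
    (Finset.range k) (Finset.range (n - k + 1)) _ _).symm]
  have hterm : ∀ m : Fin n,
      (∑ i ∈ Finset.range k, (-1 : MvPolynomial (Fin n ⊕ Fin n) F) ^ (k - 1 + i)
        * RkAux.gC (RkAux.vx F n) (k - 1) i * X (Sum.inl m) ^ (Fintype.card F ^ i))
      * (∑ j ∈ Finset.range (n - k + 1), (-1 : MvPolynomial (Fin n ⊕ Fin n) F) ^ (n - k + j)
        * Fr (RkAux.gC (RkAux.vy F n) (n - k) j) * X (Sum.inr m) ^ (Fintype.card F ^ (j + 1)))
      = RkAux.gP (RkAux.vx F n) (k - 1) (X (Sum.inl m))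
        * Fr (RkAux.gP (RkAux.vy F n) (n - k) (X (Sum.inr m))) := by
    intro m
    congr 1
    · have h := RkAux.gP_eq (RkAux.vx F n) Fr hFr (k - 1) (X (Sum.inl m))
      rw [show k - 1 + 1 = k by omega] at h
      exact h.symm
    · have h := RkAux.gP_eq (RkAux.vy F n) Fr hFr (n - k) (X (Sum.inr m))
      rw [h, map_sum]
      refine Finset.sum_congr rfl fun t _ => ?_
      rw [map_mul, map_mul, map_pow, map_neg, map_one, map_pow, hFr (X (Sum.inr m)),
        ← pow_mul,
        show Fintype.card F * Fintype.card F ^ t = Fintype.card F ^ (t + 1) by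
          rw [pow_succ]; ring]
  rw [Finset.sum_congr rfl fun (m : Fin n) _ => hterm m]
  rw [Finset.sum_eq_single (⟨k - 1, hkn⟩ : Fin n)]
  · have hx : X (Sum.inl (⟨k - 1, hkn⟩ : Fin n)) = RkAux.vx F n (k - 1) :=
      (RkAux.vx_eq ⟨k - 1, hkn⟩).symm
    have hy : RkAux.vy F n (n - k) = X (Sum.inr (⟨k - 1, hkn⟩ : Fin n)) := by
      have h := RkAux.vy_eq (F := F) (n := n) ⟨k - 1, hkn⟩
      rw [show n - 1 - ((⟨k - 1, hkn⟩ : Fin n)).val = n - k by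
        show n - 1 - (k - 1) = n - k; omega] at h
      exact h
    have h1 : RkAux.gP (RkAux.vx F n) (k - 1) (X (Sum.inl (⟨k - 1, hkn⟩ : Fin n)))
        = fX F n k := by
      rw [RkAux.fX_eq k hk1 hk2, RkAux.gf]
      exact congrArg (RkAux.gP (RkAux.vx F n) (k - 1)) hx
    have h2 : RkAux.gP (RkAux.vy F n) (n - k) (X (Sum.inr (⟨k - 1, hkn⟩ : Fin n)))
        = fY F n (n + 1 - k) := by
      have h3 := RkAux.fY_eq (F := F) (n := n) (n + 1 - k) (by omega) (by omega)
      rw [show n + 1 - k - 1 = n - k by omega] at h3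
      rw [h3, RkAux.gf]
      exact (congrArg (RkAux.gP (RkAux.vy F n) (n - k)) hy).symm
    rw [h1, h2, hFr]
  · intro m _ hm
    rcases Nat.lt_or_ge m.val (k - 1) with h | h
    · have hx : X (Sum.inl m) = RkAux.vx F n m.val := (RkAux.vx_eq m).symm
      rw [hx, RkAux.gP_root (RkAux.vx F n) (k - 1) m.val h, zero_mul]
    · have hge : k ≤ m.val := by
        have hne : m.val ≠ k - 1 := fun hc => hm (Fin.ext hc)
        omega
      have hy : X (Sum.inr m) = RkAux.vy F n (n - 1 - m.val) := (RkAux.vy_eq m).symm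
      rw [hy, RkAux.gP_root (RkAux.vy F n) (n - k) (n - 1 - m.val)
        (by have := m.isLt; omega), map_zero, mul_zero]
  · intro h
    exact absurd (Finset.mem_univ _) h
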